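/- Let G be a finitely generated group, A a finite vector space over a field, M ⊆ G finite. The stable surjunctivity conjecture holds for all linear NUCA A^G → A^G of finite memory with uniformly bounded singularity over G if and only if the stable dual-surjunctivity conjecture holds for such NUCA; i.e., (every stably injective such NUCA is stably invertible) ⟺ (every stably post-surjective such NUCA is stably invertible). -/

import Mathlib

open Pointwise

/-- The NUCA with memory `M` and configuration of local defining maps `s`. -/
def nuca {G A : Type*} [Group G] (M : Set G) (s : G → (M → A) → A)
    (x : G → A) : G → A :=
  fun g => s g fun m => x (g * (m : G))

/-- `Σ(s)`: orbit closure of `s` in the prodiscrete topology. -/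
def orbitClosure {G S : Type*} [Group G] (s : G → S) : Set (G → S) :=
  @closure _ (@Pi.topologicalSpace G (fun _ => S) (fun _ => ⊥))
    {p | ∃ g : G, p = fun h => s (g⁻¹ * h)}

/-- A configuration is asymptotically constant if it agrees with a constant
configuration outside a finite set. -/
def AsympConst {G S : Type*} (s : G → S) : Prop :=
  ∃ c : S, {g : G | s g ≠ c}.Finite

/-- Two configurations are asymptotic if they agree outside a finite set. -/
def Asymptotic {G A : Type*} (x y : G → A) : Prop :=
  {g : G | x g ≠ y g}.Finite

/-- `σ` is post-surjective. -/
def PostSurj {G A : Type*} (σ : (G → A) → (G → A)) : Prop :=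
  ∀ x y : G → A, Asymptotic y (σ x) → ∃ z : G → A, Asymptotic z x ∧ σ z = y

/-- `s` has uniformly bounded singularity. -/
def UBS {G S : Type*} [Group G] (s : G → S) : Prop :=
  ∀ E : Set G, E.Finite → (1 : G) ∈ E → E⁻¹ = E →
    ∃ F : Set G, F.Finite ∧ E ⊆ F ∧ ∃ c : S, ∀ g ∈ (F * E) \ F, s g = c

/-- `σ_s` is stably invertible: there are a finite memory `N` and `t` such that
every `p ∈ Σ(s)` has a two-sided inverse `σ_q` with `q ∈ Σ(t)`. -/
def StablyInvertible {G A : Type*} [Group G] (M : Set G)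
    (s : G → (M → A) → A) : Prop :=
  ∃ N : Set G, N.Finite ∧ ∃ t : G → (N → A) → A,
    ∀ p ∈ orbitClosure s, ∃ q ∈ orbitClosure t,
      (∀ x, nuca N q (nuca M p x) = x) ∧ (∀ x, nuca M p (nuca N q x) = x)

set_option linter.unusedSectionVars false
set_option maxHeartbeats 1000000

section Pairing
variable (k : Type*) {A : Type*} [Field k] [AddCommGroup A] [Module k A] [Finite A]

instance (priority := 100) modFin : Module.Finite k A := Module.Finite.of_finite

noncomputable instance fintypeOVSI : Fintype (Module.Basis.ofVectorSpaceIndex k A) := Fintype.ofFinite _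

noncomputable def bA : Module.Basis (Module.Basis.ofVectorSpaceIndex k A) k A := Module.Basis.ofVectorSpace k A

noncomputable def pairA (a a' : A) : k := ∑ i, (bA k).repr a i * (bA k).repr a' i

lemma pairA_zero_left (a' : A) : pairA k (0:A) a' = 0 := by
  simp [pairA]

lemma pairA_zero_right (a : A) : pairA k a (0:A) = 0 := by
  simp [pairA]

lemma pairA_add_left (a b c : A) : pairA k (a + b) c = pairA k a c + pairA k b c := by
  simp [pairA, add_mul, Finset.sum_add_distrib]

lemma pairA_add_right (a b c : A) : pairA k a (b + c) = pairA k a b + pairA k a c := by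
  simp [pairA, mul_add, Finset.sum_add_distrib]

lemma pairA_smul_left (r : k) (a c : A) : pairA k (r • a) c = r * pairA k a c := by
  simp [pairA, Finset.mul_sum, mul_assoc]

lemma pairA_smul_right (r : k) (a c : A) : pairA k a (r • c) = r * pairA k a c := by
  simp [pairA, Finset.mul_sum]; ring_nf
  exact Finset.sum_congr rfl fun i _ => by ring

lemma pairA_comm (a a' : A) : pairA k a a' = pairA k a' a := by
  simp [pairA, mul_comm]

lemma pairA_basis_right (a : A) (j : Module.Basis.ofVectorSpaceIndex k A) :
    pairA k a (bA k j) = (bA k).repr a j := by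
  classical
  simp only [pairA, Module.Basis.repr_self, Finsupp.single_apply]
  simp

lemma pairA_right_cancel {a : A} (h : ∀ a' : A, pairA k a a' = 0) : a = 0 := by
  have h2 : ∀ j, (bA k).repr a j = 0 := fun j => by
    rw [← pairA_basis_right k a j]; exact h _
  have := Module.Basis.sum_repr (bA k) a
  rw [← this]
  simp [h2]

lemma pairA_left_cancel {a : A} (h : ∀ a' : A, pairA k a' a = 0) : a = 0 :=
  pairA_right_cancel k (fun a' => by rw [pairA_comm]; exact h a')

/-- transpose of a map `A → A` (meaningful when the map is linear). -/
noncomputable def transA (f : A → A) (a' : A) : A :=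
  ∑ j, (∑ i, (bA k).repr (f (bA k j)) i * (bA k).repr a' i) • bA k j

lemma transA_zero (f : A → A) : transA k f 0 = 0 := by
  simp [transA]

lemma transA_isLinear (f : A → A) : IsLinearMap k (transA k f) := by
  constructor
  · intro x y
    simp [transA, mul_add, Finset.sum_add_distrib, add_smul]
  · intro r x
    unfold transA
    rw [Finset.smul_sum]
    refine Finset.sum_congr rfl fun j _ => ?_
    rw [smul_smul]
    congr 1
    simp [Finset.mul_sum]
    exact Finset.sum_congr rfl fun i _ => by ring

lemma pairA_transA {f : A → A} (hf : IsLinearMap k f) (a a' : A) :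
    pairA k (f a) a' = pairA k a (transA k f a') := by
  classical
  have hrepr : ∀ i, (bA k).repr (f a) i = ∑ j, (bA k).repr a j * (bA k).repr (f (bA k j)) i := by
    intro i
    conv_lhs => rw [← Module.Basis.sum_repr (bA k) a]
    have : f (∑ j, (bA k).repr a j • bA k j) = ∑ j, (bA k).repr a j • f (bA k j) := by
      rw [show f = ⇑(IsLinearMap.mk' f hf) from rfl, map_sum]
      simp only [IsLinearMap.mk'_apply, map_smul]
    rw [this, map_sum]
    simp [Finsupp.smul_apply, smul_eq_mul]
  have hrepr' : ∀ j, (bA k).repr (transA k f a') j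
      = ∑ i, (bA k).repr (f (bA k j)) i * (bA k).repr a' i := by
    intro j
    unfold transA
    rw [map_sum]
    classical
    simp only [map_smul, Module.Basis.repr_self, Finsupp.smul_apply, Finsupp.single_apply,
      smul_eq_mul, mul_ite, mul_one, mul_zero, Finset.sum_apply']
    rw [Finset.sum_ite_eq' Finset.univ j]
    simp
  unfold pairA
  simp only [hrepr, hrepr', Finset.sum_mul, Finset.mul_sum]
  rw [Finset.sum_comm]
  refine Finset.sum_congr rfl fun j _ => Finset.sum_congr rfl fun i _ => by ring

end Pairing
section Configs
variable (k : Type*) {A : Type*} [Field k] [AddCommGroup A] [Module k A] [Finite A]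
variable {G : Type*} [Group G]

open Classical in
/-- delta function -/
noncomputable def dvec {β : Type*} (b0 : β) (a : A) : β → A :=
  fun b => if b = b0 then a else 0

lemma dvec_zero {β : Type*} (b0 : β) : dvec (A := A) b0 0 = 0 := by
  funext b; simp [dvec]

lemma dvec_isLinear {β : Type*} (b0 : β) :
    IsLinearMap k (dvec (A := A) b0) := by
  constructor
  · intro x y; funext b; by_cases h : b = b0 <;> simp [dvec, h]
  · intro r x; funext b; by_cases h : b = b0 <;> simp [dvec, h]

lemma dvec_decomp {β : Type*} [Fintype β] {f : (β → A) → A}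
    (hf : IsLinearMap k f) (w : β → A) :
    f w = ∑ b : β, f (dvec b (w b)) := by
  classical
  have hw : w = ∑ b : β, dvec b (w b) := by
    funext b'
    rw [Finset.sum_apply]
    simp only [dvec]
    rw [Finset.sum_ite_eq Finset.univ b']
    simp
  conv_lhs => rw [hw]
  rw [show f = ⇑(IsLinearMap.mk' f hf) from rfl, map_sum]

/-- finite support -/
def FS (x : G → A) : Prop := (Function.support x).Finite

lemma FS_zero : FS (0 : G → A) := by simp [FS, Function.support]

/-- pairing of configurations -/
noncomputable def cpair (x y : G → A) : k := ∑ᶠ g, pairA k (x g) (y g)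

lemma cpair_support_right (x y : G → A) :
    Function.support (fun g => pairA k (x g) (y g)) ⊆ Function.support y := by
  intro g hg
  simp only [Function.mem_support] at hg ⊢
  intro h; exact hg (by rw [h, pairA_zero_right])

lemma cpair_support_left (x y : G → A) :
    Function.support (fun g => pairA k (x g) (y g)) ⊆ Function.support x := by
  intro g hg
  simp only [Function.mem_support] at hg ⊢
  intro h; exact hg (by rw [h, pairA_zero_left])

lemma cpair_eq_sum_right (x y : G → A) (hy : FS y) (T : Finset G)
    (hT : Function.support y ⊆ ↑T) :
    cpair k x y = ∑ g ∈ T, pairA k (x g) (y g) :=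
  finsum_eq_sum_of_support_subset _ (fun g hg => hT (cpair_support_right k x y hg))

lemma cpair_comm (x y : G → A) : cpair k x y = cpair k y x := by
  unfold cpair
  exact finsum_congr fun g => pairA_comm k _ _

lemma cpair_gdelta (x : G → A) (g0 : G) (a : A) :
    cpair k x (dvec g0 a) = pairA k (x g0) a := by
  classical
  rw [cpair_eq_sum_right k x _ ?fs {g0} ?sub]
  · simp [dvec]
  case fs =>
    refine Set.Finite.subset (Set.finite_singleton g0) ?_
    intro g hg
    simp only [Function.mem_support, dvec] at hg
    by_contra h
    exact hg (if_neg (by simpa using h))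
  case sub =>
    intro g hg
    simp only [Function.mem_support, dvec] at hg
    by_contra h
    exact hg (if_neg (by simpa using h))

lemma cpair_eq_of_forall_right {u v : G → A}
    (h : ∀ y : G → A, FS y → cpair k u y = cpair k v y) : u = v := by
  classical
  funext g
  have h2 : ∀ a : A, pairA k (u g) a = pairA k (v g) a := by
    intro a
    have := h (dvec g a) ?_
    · rwa [cpair_gdelta, cpair_gdelta] at this
    · refine Set.Finite.subset (Set.finite_singleton g) ?_
      intro g' hg'
      simp only [Function.mem_support, dvec] at hg'
      by_contra hne
      exact hg' (if_neg (by simpa using hne))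
  have : ∀ a : A, pairA k (u g - v g) a = 0 := by
    intro a
    have hsub : u g - v g = u g + (-1 : k) • v g := by
      rw [neg_one_smul]; abel
    rw [hsub, pairA_add_left, pairA_smul_left, h2]
    ring
  have := pairA_right_cancel k this
  have := sub_eq_zero.mp this
  exact this

lemma cpair_eq_of_forall_left {u v : G → A}
    (h : ∀ x : G → A, FS x → cpair k x u = cpair k x v) : u = v := by
  refine cpair_eq_of_forall_right k fun y hy => ?_
  rw [cpair_comm, h y hy, cpair_comm]

end Configs

section SumHelpers
variable (k : Type*) {A : Type*} [Field k] [AddCommGroup A] [Module k A] [Finite A]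

lemma pairA_sum_left {ι : Type*} (s : Finset ι) (f : ι → A) (c : A) :
    pairA k (∑ i ∈ s, f i) c = ∑ i ∈ s, pairA k (f i) c := by
  classical
  induction s using Finset.induction with
  | empty => simp [pairA_zero_left]
  | insert a s' h ih =>
                   rw [Finset.sum_insert h, Finset.sum_insert h, pairA_add_left, ih]

lemma pairA_sum_right {ι : Type*} (s : Finset ι) (f : ι → A) (c : A) :
    pairA k c (∑ i ∈ s, f i) = ∑ i ∈ s, pairA k c (f i) := by
  classical
  induction s using Finset.induction with
  | empty => simp [pairA_zero_right]
  | insert a s' h ih =>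
                   rw [Finset.sum_insert h, Finset.sum_insert h, pairA_add_right, ih]

end SumHelpers
section Nuca
variable (k : Type*) {A : Type*} [Field k] [AddCommGroup A] [Module k A] [Finite A]
variable {G : Type*} [Group G]

lemma nuca_add {N : Set G} {p : G → (N → A) → A} (hp : ∀ g, IsLinearMap k (p g))
    (x y : G → A) : nuca N p (x + y) = nuca N p x + nuca N p y := by
  funext g
  exact (hp g).map_add (fun n : N => x (g * n)) (fun n : N => y (g * n))

lemma nuca_smul {N : Set G} {p : G → (N → A) → A} (hp : ∀ g, IsLinearMap k (p g))
    (r : k) (x : G → A) : nuca N p (r • x) = r • nuca N p x := by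
  funext g
  exact (hp g).map_smul r (fun n : N => x (g * n))

lemma nuca_zero {N : Set G} {p : G → (N → A) → A} (hp : ∀ g, IsLinearMap k (p g)) :
    nuca N p (0 : G → A) = 0 := by
  funext g
  have : (fun n : N => (0 : G → A) (g * n)) = (0 : N → A) := rfl
  simp only [nuca, this]
  rw [(hp g).map_zero]
  rfl

lemma nuca_sub {N : Set G} {p : G → (N → A) → A} (hp : ∀ g, IsLinearMap k (p g))
    (x y : G → A) : nuca N p (x - y) = nuca N p x - nuca N p y := by
  have h := nuca_add k hp (x - y) y
  rw [sub_add_cancel] at h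
  rw [h]; abel

lemma nuca_support {N : Set G} (hN : N.Finite) {p : G → (N → A) → A}
    (hp : ∀ g, IsLinearMap k (p g)) {x : G → A} (hx : FS x) : FS (nuca N p x) := by
  refine Set.Finite.subset ((hx.mul hN.inv) : (Function.support x * N⁻¹).Finite) ?_
  intro g hg
  simp only [Function.mem_support] at hg
  by_contra h
  apply hg
  have : (fun n : N => x (g * n)) = 0 := by
    funext n
    by_contra hxn
    refine h ?_
    have hgeq : g = (g * (n : G)) * ((n : G))⁻¹ := by group
    rw [hgeq]
    exact Set.mul_mem_mul hxn (Set.inv_mem_inv.mpr n.2)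
  rw [nuca, this, (hp g).map_zero]

/-- the dual NUCA local rule, with memory `N⁻¹`. -/
noncomputable def starR (N : Set G) [Fintype N] (p : G → (N → A) → A) :
    G → ((N⁻¹ : Set G) → A) → A :=
  fun h w => ∑ n : N, transA k (fun a => p (h * (n : G)⁻¹) (dvec n a))
    (w ⟨(n : G)⁻¹, Set.inv_mem_inv.mpr n.2⟩)

lemma starR_isLinear (N : Set G) [Fintype N] (p : G → (N → A) → A) (g : G) :
    IsLinearMap k (starR k N p g) := by
  constructor
  · intro w1 w2
    unfold starR
    rw [← Finset.sum_add_distrib]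
    exact Finset.sum_congr rfl fun n _ => (transA_isLinear k _).map_add _ _
  · intro r w
    unfold starR
    rw [Finset.smul_sum]
    exact Finset.sum_congr rfl fun n _ => (transA_isLinear k _).map_smul _ _

lemma starR_congr_window (N : Set G) [Fintype N] {p q : G → (N → A) → A} {g : G}
    (h : ∀ n : N, p (g * (n : G)⁻¹) = q (g * (n : G)⁻¹)) : starR k N p g = starR k N q g := by
  funext w
  unfold starR
  exact Finset.sum_congr rfl fun n _ => by rw [h n]

lemma starR_translate (N : Set G) [Fintype N] (p : G → (N → A) → A) (g0 g : G) :
    starR k N (fun h => p (g0⁻¹ * h)) g = starR k N p (g0⁻¹ * g) := by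
  funext w
  unfold starR
  exact Finset.sum_congr rfl fun n _ => by rw [mul_assoc]

end Nuca
section Adjoint
variable (k : Type*) {A : Type*} [Field k] [AddCommGroup A] [Module k A] [Finite A]
variable {G : Type*} [Group G]

lemma adjoint {N : Set G} (hN : N.Finite) [Fintype N] {p : G → (N → A) → A}
    (hp : ∀ g, IsLinearMap k (p g)) (x y : G → A) (hxy : FS x ∨ FS y) :
    cpair k (nuca N p x) y = cpair k x (nuca (N⁻¹) (starR k N p) y) := by
  classical
  set F : G → N → k := fun g n =>
    pairA k (x (g * n)) (transA k (fun a => p g (dvec n a)) (y g)) with hF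
  -- pointwise identities
  have hloc : ∀ n : N, ∀ g : G, IsLinearMap k (fun a => p g (dvec n a)) := by
    intro n g
    constructor
    · intro a b
      rw [(dvec_isLinear k n).map_add, (hp g).map_add]
    · intro r a
      rw [(dvec_isLinear k n).map_smul, (hp g).map_smul]
  have hpt1 : ∀ g : G, pairA k (nuca N p x g) (y g) = ∑ n : N, F g n := by
    intro g
    have : nuca N p x g = ∑ n : N, p g (dvec n (x (g * n))) := by
      rw [nuca, dvec_decomp k (hp g)]
    rw [this, pairA_sum_left]
    exact Finset.sum_congr rfl fun n _ => pairA_transA k (hloc n g) _ _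
  have hpt2 : ∀ h : G, pairA k (x h) (nuca (N⁻¹) (starR k N p) y h)
      = ∑ n : N, F (h * (n : G)⁻¹) n := by
    intro h
    have : nuca (N⁻¹) (starR k N p) y h
        = ∑ n : N, transA k (fun a => p (h * (n : G)⁻¹) (dvec n a)) (y (h * (n : G)⁻¹)) := by
      rw [nuca, starR]
    rw [this, pairA_sum_right]
    refine Finset.sum_congr rfl fun n _ => ?_
    rw [hF]
    simp only [inv_mul_cancel_right]
  -- finiteness of relevant supports
  have hKfin : ∀ n : N, (Function.support (fun g => F g n)).Finite := by
    intro n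
    rcases hxy with hx | hy
    · refine Set.Finite.subset (hx.mul (Set.finite_singleton ((n : G))⁻¹)) ?_
      intro g hg
      simp only [Function.mem_support] at hg
      have hxg : x (g * n) ≠ 0 := by
        intro h0
        exact hg (by simp only [hF, h0, pairA_zero_left])
      have : g = (g * (n : G)) * ((n : G))⁻¹ := by group
      rw [this]
      exact Set.mul_mem_mul hxg rfl
    · refine Set.Finite.subset hy ?_
      intro g hg
      simp only [Function.mem_support] at hg ⊢
      intro h0
      exact hg (by simp only [hF, h0, transA_zero, pairA_zero_right])
  have hS1fin : (Function.support (fun g => pairA k (nuca N p x g) (y g))).Finite := by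
    rcases hxy with hx | hy
    · exact Set.Finite.subset (nuca_support k hN hp hx) (cpair_support_left k _ y)
    · exact Set.Finite.subset hy (cpair_support_right k _ y)
  have hS2fin :
      (Function.support (fun h => pairA k (x h) (nuca (N⁻¹) (starR k N p) y h))).Finite := by
    rcases hxy with hx | hy
    · exact Set.Finite.subset hx (cpair_support_left k x _)
    · exact Set.Finite.subset
        (nuca_support k hN.inv (starR_isLinear k N p) hy) (cpair_support_right k x _)
  set T : Finset G := (hS1fin.toFinset ∪ hS2fin.toFinset) ∪
      Finset.univ.biUnion (fun n : N =>
        (hKfin n).toFinset ∪ ((hKfin n).toFinset.image (· * (n : G)))) with hT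
  have hKsubT : ∀ n : N, (hKfin n).toFinset ⊆ T := by
    intro n g hg
    rw [hT]
    simp only [Finset.mem_union, Finset.mem_biUnion]
    exact Or.inr ⟨n, Finset.mem_univ n, Or.inl hg⟩
  have hKimgsubT : ∀ n : N, (hKfin n).toFinset.image (· * (n : G)) ⊆ T := by
    intro n g hg
    rw [hT]
    simp only [Finset.mem_union, Finset.mem_biUnion]
    exact Or.inr ⟨n, Finset.mem_univ n, Or.inr hg⟩
  calc cpair k (nuca N p x) y
      = ∑ g ∈ T, pairA k (nuca N p x g) (y g) := by
        refine finsum_eq_sum_of_support_subset _ ?_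
        intro g hg
        have : g ∈ hS1fin.toFinset := by rwa [Set.Finite.mem_toFinset]
        rw [hT]
        simp only [Finset.coe_union, Set.mem_union, Finset.mem_coe]
        exact Or.inl (Or.inl this)
    _ = ∑ g ∈ T, ∑ n : N, F g n := Finset.sum_congr rfl fun g _ => hpt1 g
    _ = ∑ n : N, ∑ g ∈ T, F g n := Finset.sum_comm
    _ = ∑ n : N, ∑ h ∈ T, F (h * (n : G)⁻¹) n := by
        refine Finset.sum_congr rfl fun n _ => ?_
        have e1 : ∑ g ∈ T, F g n = ∑ g ∈ (hKfin n).toFinset, F g n := by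
          refine (Finset.sum_subset (hKsubT n) ?_).symm
          intro g _ hg
          by_contra h0
          exact hg (by rw [Set.Finite.mem_toFinset]; exact h0)
        have e2 : ∑ h ∈ (hKfin n).toFinset.image (· * (n : G)), F (h * (n : G)⁻¹) n
            = ∑ g ∈ (hKfin n).toFinset, F g n := by
          rw [Finset.sum_image (by intro a _ b _ h; exact mul_right_cancel h)]
          exact Finset.sum_congr rfl fun g _ => by rw [mul_inv_cancel_right]
        have e3 : ∑ h ∈ T, F (h * (n : G)⁻¹) n
            = ∑ h ∈ (hKfin n).toFinset.image (· * (n : G)), F (h * (n : G)⁻¹) n := by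
          refine (Finset.sum_subset (hKimgsubT n) ?_).symm
          intro h _ hh
          by_contra h0
          refine hh ?_
          rw [Finset.mem_image]
          refine ⟨h * (n : G)⁻¹, ?_, by group⟩
          rw [Set.Finite.mem_toFinset]
          exact h0
        rw [e1, e3, e2]
    _ = ∑ h ∈ T, ∑ n : N, F (h * (n : G)⁻¹) n := Finset.sum_comm
    _ = ∑ h ∈ T, pairA k (x h) (nuca (N⁻¹) (starR k N p) y h) :=
        Finset.sum_congr rfl fun h _ => (hpt2 h).symm
    _ = cpair k x (nuca (N⁻¹) (starR k N p) y) := by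
        refine (finsum_eq_sum_of_support_subset _ ?_).symm
        intro h hh
        have : h ∈ hS2fin.toFinset := by rwa [Set.Finite.mem_toFinset]
        rw [hT]
        simp only [Finset.coe_union, Set.mem_union, Finset.mem_coe]
        exact Or.inl (Or.inr this)

end Adjoint
section Topology
variable {G : Type*} [Group G]

lemma mem_orbitClosure_iff {S : Type*} (s : G → S) (p : G → S) :
    p ∈ orbitClosure s ↔ ∀ W : Finset G, ∃ g0 : G, ∀ g ∈ W, p g = s (g0⁻¹ * g) := by
  classical
  letI : TopologicalSpace S := ⊥
  haveI : DiscreteTopology S := ⟨rfl⟩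
  unfold orbitClosure
  rw [mem_closure_iff]
  constructor
  · intro h W
    have hopen : IsOpen ((W : Set G).pi (fun g => ({p g} : Set S))) :=
      isOpen_set_pi W.finite_toSet (fun _ _ => isOpen_discrete _)
    have hmem : p ∈ (W : Set G).pi (fun g => ({p g} : Set S)) := fun g _ => rfl
    obtain ⟨q, hqO, g0, rfl⟩ := h _ hopen hmem
    exact ⟨g0, fun g hg => (hqO g hg).symm⟩
  · intro h O hO hpO
    obtain ⟨I, u, hu, hsub⟩ := isOpen_pi_iff.mp hO p hpO
    obtain ⟨g0, hg0⟩ := h I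
    refine ⟨fun h' => s (g0⁻¹ * h'), hsub ?_, ⟨g0, rfl⟩⟩
    intro g hg
    have := (hu g hg).2
    rwa [hg0 g hg] at this

lemma self_mem_orbitClosure {S : Type*} (s : G → S) (g0 : G) :
    (fun h => s (g0⁻¹ * h)) ∈ orbitClosure s := by
  rw [mem_orbitClosure_iff]
  exact fun W => ⟨g0, fun g _ => rfl⟩

lemma isClosed_of_window {S : Type*} (D : Set (G → S)) (W : Finset G)
    (hD : ∀ x x', (∀ g ∈ W, x g = x' g) → x ∈ D → x' ∈ D) :
    @IsClosed (G → S) (@Pi.topologicalSpace G (fun _ => S) (fun _ => ⊥)) D := by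
  classical
  letI : TopologicalSpace S := ⊥
  haveI : DiscreteTopology S := ⟨rfl⟩
  let ρ : (G → S) → ({g // g ∈ W} → S) := fun x w => x w.1
  have hρ : Continuous ρ := continuous_pi fun w => continuous_apply (w.1 : G)
  have hDeq : D = ρ ⁻¹' (ρ '' D) := by
    apply Set.Subset.antisymm
    · exact Set.subset_preimage_image ρ D
    · rintro x ⟨x', hx', hxx⟩
      refine hD x' x (fun g hg => ?_) hx'
      have := congrFun hxx ⟨g, hg⟩
      exact this
  rw [hDeq]
  exact (isClosed_discrete _).preimage hρ

lemma orbitClosure_isClosed {S : Type*} (s : G → S) :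
    @IsClosed (G → S) (@Pi.topologicalSpace G (fun _ => S) (fun _ => ⊥)) (orbitClosure s) := by
  letI : TopologicalSpace S := ⊥
  exact isClosed_closure

lemma exists_mem_forall_window {S : Type*} [Finite S] (C : Finset G → Set (G → S))
    (hclosed : ∀ W, @IsClosed (G → S) (@Pi.topologicalSpace G (fun _ => S) (fun _ => ⊥)) (C W))
    (hne : ∀ W, (C W).Nonempty)
    (hmono : ∀ W W', W ⊆ W' → C W' ⊆ C W) :
    ∃ x, ∀ W, x ∈ C W := by
  classical
  letI : TopologicalSpace S := ⊥
  haveI : DiscreteTopology S := ⟨rfl⟩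
  haveI : CompactSpace S := Finite.compactSpace
  have hdir : Directed (fun a b : Set (G → S) => a ⊇ b) C := by
    intro W W'
    exact ⟨W ∪ W', hmono _ _ Finset.subset_union_left, hmono _ _ Finset.subset_union_right⟩
  have := IsCompact.nonempty_iInter_of_directed_nonempty_isCompact_isClosed C hdir hne
    (fun W => (hclosed W).isCompact) hclosed
  obtain ⟨x, hx⟩ := this
  exact ⟨x, fun W => Set.mem_iInter.mp hx W⟩

end Topology
section StarClosure
variable (k : Type*) {A : Type*} [Field k] [AddCommGroup A] [Module k A] [Finite A]
variable {G : Type*} [Group G]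

lemma closure_isLinear {M : Set G} {s : G → (M → A) → A}
    (hs : ∀ g, IsLinearMap k (s g)) {p : G → (M → A) → A} (hp : p ∈ orbitClosure s) :
    ∀ g, IsLinearMap k (p g) := by
  intro g
  rw [mem_orbitClosure_iff] at hp
  obtain ⟨g0, hg0⟩ := hp {g}
  rw [hg0 g (Finset.mem_singleton_self g)]
  exact hs _

lemma star_mem_orbitClosure {M : Set G} [Fintype M] (s : G → (M → A) → A)
    {p : G → (M → A) → A} (hp : p ∈ orbitClosure s) :
    starR k M p ∈ orbitClosure (starR k M s) := by
  classical
  rw [mem_orbitClosure_iff] at hp ⊢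
  intro W
  obtain ⟨g0, hg0⟩ := hp (W.biUnion (fun g => Finset.image (fun n : M => g * (n : G)⁻¹)
    Finset.univ))
  refine ⟨g0, fun g hg => ?_⟩
  have h1 : starR k M p g = starR k M (fun h => s (g0⁻¹ * h)) g := by
    refine starR_congr_window k M (fun n => ?_)
    exact hg0 _ (Finset.mem_biUnion.mpr ⟨g, hg, Finset.mem_image.mpr
      ⟨n, Finset.mem_univ n, rfl⟩⟩)
  rw [h1, starR_translate]

lemma orbitClosure_star_surj {M : Set G} [Fintype M] (s : G → (M → A) → A)
    {Q : G → ((M⁻¹ : Set G) → A) → A} (hQ : Q ∈ orbitClosure (starR k M s)) :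
    ∃ p ∈ orbitClosure s, Q = starR k M p := by
  classical
  rw [mem_orbitClosure_iff] at hQ
  set C : Finset G → Set (G → (M → A) → A) := fun W =>
    {p | p ∈ orbitClosure s ∧ ∀ g ∈ W, starR k M p g = Q g} with hC
  have hclosed : ∀ W, @IsClosed (G → ((M → A) → A))
      (@Pi.topologicalSpace G (fun _ => (M → A) → A) (fun _ => ⊥)) (C W) := by
    intro W
    letI : TopologicalSpace ((M → A) → A) := ⊥
    have h2 : @IsClosed (G → ((M → A) → A))
        (@Pi.topologicalSpace G (fun _ => (M → A) → A) (fun _ => ⊥))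
        {p | ∀ g ∈ W, starR k M p g = Q g} := by
      refine isClosed_of_window _ (W.biUnion (fun g => Finset.image
        (fun n : M => g * (n : G)⁻¹) Finset.univ)) ?_
      intro x x' hxx hx g hg
      have : starR k M x' g = starR k M x g := by
        refine starR_congr_window k M (fun n => ?_)
        exact (hxx _ (Finset.mem_biUnion.mpr ⟨g, hg, Finset.mem_image.mpr
          ⟨n, Finset.mem_univ n, rfl⟩⟩)).symm
      rw [this]
      exact hx g hg
    exact (orbitClosure_isClosed s).inter h2
  have hne : ∀ W, (C W).Nonempty := by
    intro W
    obtain ⟨g0, hg0⟩ := hQ W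
    refine ⟨fun h => s (g0⁻¹ * h), self_mem_orbitClosure s g0, fun g hg => ?_⟩
    rw [starR_translate, ← hg0 g hg]
  have hmono : ∀ W W', W ⊆ W' → C W' ⊆ C W := by
    intro W W' hWW p hp
    exact ⟨hp.1, fun g hg => hp.2 g (hWW hg)⟩
  obtain ⟨p, hp⟩ := exists_mem_forall_window C hclosed hne hmono
  refine ⟨p, (hp ∅).1, ?_⟩
  funext g
  exact ((hp {g}).2 g (Finset.mem_singleton_self g)).symm

end StarClosure
section Transfers
variable (k : Type*) {A : Type*} [Field k] [AddCommGroup A] [Module k A] [Finite A]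
variable {G : Type*} [Group G]

lemma cpair_zero_right (x : G → A) : cpair k x (0 : G → A) = 0 := by
  unfold cpair
  simp [pairA_zero_right]

lemma cpair_zero_left (x : G → A) : cpair k (0 : G → A) x = 0 := by
  unfold cpair
  simp [pairA_zero_left]

lemma FS_of_asymptotic_zero {y : G → A} (h : Asymptotic y (0 : G → A)) : FS y := h

lemma star_injective_of_postSurj {M : Set G} (hM : M.Finite) [Fintype M]
    {p : G → (M → A) → A} (hp : ∀ g, IsLinearMap k (p g))
    (hps : PostSurj (nuca M p)) :
    Function.Injective (nuca (M⁻¹) (starR k M p)) := by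
  intro w w' h
  have hslin := starR_isLinear k M p
  set u := w - w' with hu
  have hu0 : nuca (M⁻¹) (starR k M p) u = 0 := by
    rw [hu, nuca_sub k hslin, h, sub_self]
  have hcz : ∀ y : G → A, FS y → cpair k y u = cpair k y 0 := by
    intro y hy
    obtain ⟨z, hz1, hz2⟩ := hps 0 y (by
      rw [nuca_zero k hp]
      exact hy)
    have hzFS : FS z := hz1
    rw [cpair_zero_right]
    calc cpair k y u = cpair k (nuca M p z) u := by rw [hz2]
      _ = cpair k z (nuca (M⁻¹) (starR k M p) u) := adjoint k hM hp z u (Or.inl hzFS)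
      _ = 0 := by rw [hu0, cpair_zero_right]
  have : u = 0 := cpair_eq_of_forall_right k (fun y hy => by
    rw [cpair_comm, hcz y hy, cpair_comm])
  exact sub_eq_zero.mp this

lemma exists_window_of_injective {M : Set G} (hM : M.Finite) [Fintype M]
    {p : G → (M → A) → A} (hp : ∀ g, IsLinearMap k (p g))
    (hinj : Function.Injective (nuca M p)) {y : G → A} (hy : FS y) :
    ∃ Fw : Finset G, ∀ x, (∀ g ∈ Fw, nuca M p x g = 0) → cpair k x y = 0 := by
  classical
  by_contra hcon
  push_neg at hcon
  set C : Finset G → Set (G → A) := fun W =>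
    {x | (∀ g ∈ W, nuca M p x g = 0) ∧ cpair k x y ≠ 0} with hC
  have hclosed : ∀ W, @IsClosed (G → A)
      (@Pi.topologicalSpace G (fun _ => A) (fun _ => ⊥)) (C W) := by
    intro W
    refine isClosed_of_window _
      ((W.biUnion (fun g => Finset.image (fun n : M => g * (n : G)) Finset.univ))
        ∪ hy.toFinset) ?_
    intro x x' hxx hx
    constructor
    · intro g hg
      have : nuca M p x' g = nuca M p x g := by
        unfold nuca
        congr 1
        funext n
        exact (hxx _ (Finset.mem_union_left _ (Finset.mem_biUnion.mpr
          ⟨g, hg, Finset.mem_image.mpr ⟨n, Finset.mem_univ n, rfl⟩⟩))).symm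
      rw [this]
      exact hx.1 g hg
    · have : cpair k x' y = cpair k x y := by
        rw [cpair_eq_sum_right k x' y hy hy.toFinset (by
          exact fun g hg => (Set.Finite.mem_toFinset _).mpr hg),
          cpair_eq_sum_right k x y hy hy.toFinset (by
          exact fun g hg => (Set.Finite.mem_toFinset _).mpr hg)]
        refine Finset.sum_congr rfl fun g hg => ?_
        rw [hxx g (Finset.mem_union_right _ hg)]
      rw [this]
      exact hx.2
  have hne : ∀ W, (C W).Nonempty := fun W => by
    obtain ⟨x, hx1, hx2⟩ := hcon W
    exact ⟨x, hx1, hx2⟩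
  have hmono : ∀ W W', W ⊆ W' → C W' ⊆ C W := by
    intro W W' hWW x hx
    exact ⟨fun g hg => hx.1 g (hWW hg), hx.2⟩
  obtain ⟨x, hx⟩ := exists_mem_forall_window C hclosed hne hmono
  have hx0 : nuca M p x = 0 := by
    funext g
    exact (hx {g}).1 g (Finset.mem_singleton_self g)
  have : x = 0 := hinj (by rw [hx0, nuca_zero k hp])
  exact (hx ∅).2 (by rw [this, cpair_zero_left])

end Transfers
section PostSurjHard
variable (k : Type*) {A : Type*} [Field k] [AddCommGroup A] [Module k A] [Finite A]
variable {G : Type*} [Group G]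

lemma pairA_dualVec {φ : A → k} (hφ : IsLinearMap k φ) (a : A) :
    pairA k a (∑ i, φ (bA k i) • bA k i) = φ a := by
  rw [pairA_sum_right]
  have : ∀ i, pairA k a (φ (bA k i) • bA k i) = φ ((bA k).repr a i • bA k i) := by
    intro i
    rw [pairA_smul_right, pairA_basis_right, hφ.map_smul, smul_eq_mul]
    ring
  rw [Finset.sum_congr rfl fun i _ => this i]
  rw [show φ = ⇑(IsLinearMap.mk' φ hφ) from rfl, ← map_sum, Module.Basis.sum_repr]

lemma star_surj_finsupp {M : Set G} (hM : M.Finite) [Fintype M]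
    {p : G → (M → A) → A} (hp : ∀ g, IsLinearMap k (p g))
    (hinj : Function.Injective (nuca M p)) {y : G → A} (hy : FS y) :
    ∃ z : G → A, FS z ∧ nuca (M⁻¹) (starR k M p) z = y := by
  classical
  obtain ⟨Fw, hFw⟩ := exists_window_of_injective k hM hp hinj hy
  let L : (G → A) →ₗ[k] ({g // g ∈ Fw} → A) :=
    { toFun := fun x w => nuca M p x w.1
      map_add' := by
        intro x x'
        funext w
        show nuca M p (x + x') w.1 = nuca M p x w.1 + nuca M p x' w.1
        rw [nuca_add k hp]
        rfl
      map_smul' := by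
        intro r x
        funext w
        show nuca M p (r • x) w.1 = (r • nuca M p x) w.1
        rw [nuca_smul k hp] }
  let e : (G → A) →ₗ[k] k :=
    { toFun := fun x => cpair k x y
      map_add' := by
        intro x x'
        show cpair k (x + x') y = cpair k x y + cpair k x' y
        rw [cpair_eq_sum_right k _ y hy hy.toFinset (by
            exact fun g hg => (Set.Finite.mem_toFinset _).mpr hg),
          cpair_eq_sum_right k x y hy hy.toFinset (by
            exact fun g hg => (Set.Finite.mem_toFinset _).mpr hg),
          cpair_eq_sum_right k x' y hy hy.toFinset (by
            exact fun g hg => (Set.Finite.mem_toFinset _).mpr hg),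
          ← Finset.sum_add_distrib]
        exact Finset.sum_congr rfl fun g _ => pairA_add_left k _ _ _
      map_smul' := by
        intro r x
        show cpair k (r • x) y = r • cpair k x y
        rw [smul_eq_mul]
        rw [cpair_eq_sum_right k _ y hy hy.toFinset (by
            exact fun g hg => (Set.Finite.mem_toFinset _).mpr hg),
          cpair_eq_sum_right k x y hy hy.toFinset (by
            exact fun g hg => (Set.Finite.mem_toFinset _).mpr hg),
          Finset.mul_sum]
        exact Finset.sum_congr rfl fun g _ => pairA_smul_left k r _ _ }
  have hker : LinearMap.ker L ≤ LinearMap.ker e := by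
    intro x hx
    rw [LinearMap.mem_ker] at hx ⊢
    refine hFw x fun g hg => ?_
    exact congrFun hx ⟨g, hg⟩
  let ebar := (LinearMap.ker L).liftQ e hker
  let f : LinearMap.range L →ₗ[k] k := ebar ∘ₗ (L.quotKerEquivRange.symm : _ ≃ₗ[k] _).toLinearMap
  obtain ⟨ψ, hψ⟩ := LinearMap.exists_extend f
  have hψL : ∀ x, ψ (L x) = cpair k x y := by
    intro x
    have h1 : ψ (L x) = f ⟨L x, LinearMap.mem_range_self L x⟩ := by
      rw [← hψ]; rfl
    rw [h1]
    show ebar (L.quotKerEquivRange.symm ⟨L x, LinearMap.mem_range_self L x⟩) = _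
    rw [LinearMap.quotKerEquivRange_symm_apply_image]
    show ((LinearMap.ker L).liftQ e hker) ((LinearMap.ker L).mkQ x) = _
    rw [Submodule.mkQ_apply, Submodule.liftQ_apply]
    rfl
  let z : G → A := fun g =>
    if hg : g ∈ Fw then ∑ i, ψ (dvec (⟨g, hg⟩ : {g // g ∈ Fw}) (bA k i)) • bA k i else 0
  have hzFS : FS z := by
    refine Set.Finite.subset Fw.finite_toSet ?_
    intro g hg
    simp only [Function.mem_support] at hg
    by_contra h
    have h' : g ∉ Fw := fun hh => h hh
    exact hg (by simp only [z, dif_neg h'])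
  have hkey : ∀ u : G → A, cpair k u z = ψ (fun w => u w.1) := by
    intro u
    have hsub : Function.support z ⊆ ↑Fw := by
      intro g hg
      simp only [Function.mem_support] at hg
      by_contra h
      have h' : g ∉ Fw := fun hh => h hh
      exact hg (by simp only [z, dif_neg h'])
    have hterm : ∀ w : {g // g ∈ Fw}, pairA k (u w.1) (z w.1) = ψ (dvec w (u w.1)) := by
      intro w
      have hlin : IsLinearMap k (fun a : A => ψ (dvec w a)) := by
        constructor
        · intro a b; rw [(dvec_isLinear k w).map_add, map_add]
        · intro r a; rw [(dvec_isLinear k w).map_smul, map_smul, smul_eq_mul]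
      have hz : z w.1 = ∑ i, (fun a : A => ψ (dvec w a)) (bA k i) • bA k i := by
        simp only [z, dif_pos w.2]
      rw [hz]
      exact pairA_dualVec k hlin (u w.1)
    have hdec : (∑ w : {g // g ∈ Fw}, dvec w (u w.1)) = (fun w : {g // g ∈ Fw} => u w.1) := by
      funext w'
      rw [Finset.sum_apply]
      simp only [dvec]
      rw [Finset.sum_eq_single w']
      · simp
      · intro b _ hb
        exact if_neg (fun h => hb h.symm)
      · intro h
        exact absurd (Finset.mem_univ w') h
    calc cpair k u z = ∑ g ∈ Fw, pairA k (u g) (z g) :=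
          cpair_eq_sum_right k u z hzFS Fw hsub
      _ = ∑ w : {g // g ∈ Fw}, pairA k (u w.1) (z w.1) :=
          (Finset.sum_coe_sort Fw (fun g => pairA k (u g) (z g))).symm
      _ = ∑ w : {g // g ∈ Fw}, ψ (dvec w (u w.1)) :=
          Finset.sum_congr rfl fun w _ => hterm w
      _ = ψ (∑ w : {g // g ∈ Fw}, dvec w (u w.1)) := (map_sum ψ _ _).symm
      _ = ψ (fun w : {g // g ∈ Fw} => u w.1) := by rw [hdec]
  have hfinal : ∀ x : G → A, cpair k x (nuca (M⁻¹) (starR k M p) z) = cpair k x y := by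
    intro x
    rw [← adjoint k hM hp x z (Or.inr hzFS)]
    rw [hkey (nuca M p x)]
    exact hψL x
  exact ⟨z, hzFS, cpair_eq_of_forall_left k (fun x _ => hfinal x)⟩

lemma star_postSurj_of_injective {M : Set G} (hM : M.Finite) [Fintype M]
    {p : G → (M → A) → A} (hp : ∀ g, IsLinearMap k (p g))
    (hinj : Function.Injective (nuca M p)) :
    PostSurj (nuca (M⁻¹) (starR k M p)) := by
  intro x y hasym
  have hslin := starR_isLinear k M p
  have hfs : FS (y - nuca (M⁻¹) (starR k M p) x) := by
    refine Set.Finite.subset hasym ?_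
    intro g hg
    simp only [Function.mem_support, Pi.sub_apply, sub_ne_zero] at hg
    exact hg
  obtain ⟨z, hzFS, hz⟩ := star_surj_finsupp k hM hp hinj hfs
  refine ⟨x + z, ?_, ?_⟩
  · refine Set.Finite.subset hzFS ?_
    intro g hg
    simp only [Set.mem_setOf_eq, Pi.add_apply] at hg
    simp only [Function.mem_support]
    intro h0
    exact hg (by rw [h0, add_zero])
  · rw [nuca_add k hslin, hz]
    abel

end PostSurjHard
section Invertibility
variable (k : Type*) {A : Type*} [Field k] [AddCommGroup A] [Module k A] [Finite A]
variable {G : Type*} [Group G]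

lemma UBS_star {M : Set G} (hM : M.Finite) [Fintype M] {s : G → (M → A) → A}
    (hs : UBS s) : UBS (starR k M s) := by
  intro E hE h1E hEinv
  set E'' : Set G := (E ∪ (M ∪ M⁻¹)) ∪ {1} with hE''def
  have hE'' : E''.Finite := ((hE.union (hM.union hM.inv)).union (Set.finite_singleton 1))
  have h1E'' : (1 : G) ∈ E'' := Or.inr rfl
  have hE''inv : E''⁻¹ = E'' := by
    rw [hE''def]
    rw [Set.union_inv, Set.union_inv, hEinv, Set.union_inv, inv_inv]
    rw [Set.inv_singleton, inv_one]
    rw [Set.union_comm M⁻¹ M]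
  set E3 : Set G := E'' * (E'' * E'') with hE3def
  have hE3 : E3.Finite := hE''.mul (hE''.mul hE'')
  have h1E3 : (1 : G) ∈ E3 := by
    have : (1 : G) = 1 * (1 * 1) := by group
    rw [hE3def, this]
    exact Set.mul_mem_mul h1E'' (Set.mul_mem_mul h1E'' h1E'')
  have hE3inv : E3⁻¹ = E3 := by
    rw [hE3def, mul_inv_rev, mul_inv_rev, hE''inv, mul_assoc]
  obtain ⟨F, hFfin, hE3F, c, hc⟩ := hs E3 hE3 h1E3 hE3inv
  have h1F : (1 : G) ∈ F := hE3F h1E3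
  refine ⟨F * E'', hFfin.mul hE'', ?_, ?_⟩
  · intro e he
    have : e = 1 * e := by group
    rw [this]
    exact Set.mul_mem_mul h1F (Or.inl (Or.inl he))
  · refine ⟨fun w => ∑ n : M, transA k (fun a => c (dvec n a))
      (w ⟨(n : G)⁻¹, Set.inv_mem_inv.mpr n.2⟩), ?_⟩
    intro g hg
    obtain ⟨hg1, hg2⟩ := hg
    have hval : ∀ n : M, s (g * (n : G)⁻¹) = c := by
      intro n
      refine hc _ ⟨?_, ?_⟩
      · obtain ⟨u, hu, e, he, heq⟩ := hg1
        obtain ⟨f, hf, e'', he'', heq'⟩ := hu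
        have hgeq : g * (n : G)⁻¹ = f * (e'' * (e * (n : G)⁻¹)) := by
          rw [← heq, ← heq']; group
        rw [hgeq]
        exact Set.mul_mem_mul hf (Set.mul_mem_mul he''
          (Set.mul_mem_mul (Or.inl (Or.inl he)) (Or.inl (Or.inr (Or.inr (Set.inv_mem_inv.mpr n.2))))))
      · intro hmem
        refine hg2 ?_
        have : g = (g * (n : G)⁻¹) * (n : G) := by group
        rw [this]
        exact Set.mul_mem_mul hmem (Or.inl (Or.inr (Or.inl n.2)))
    funext w
    unfold starR
    exact Finset.sum_congr rfl fun n _ => by rw [hval n]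

lemma inverse_local_linear {M N : Set G} {p : G → (M → A) → A} {q : G → (N → A) → A}
    (hp : ∀ g, IsLinearMap k (p g))
    (h1 : ∀ x, nuca N q (nuca M p x) = x) (h2 : ∀ x, nuca M p (nuca N q x) = x) :
    ∀ g, IsLinearMap k (q g) := by
  classical
  have hadd : ∀ u v : G → A, nuca N q (u + v) = nuca N q u + nuca N q v := by
    intro u v
    conv_lhs => rw [← h2 u, ← h2 v, ← nuca_add k hp, h1]
  have hsmul : ∀ (r : k) (u : G → A), nuca N q (r • u) = r • nuca N q u := by
    intro r u
    conv_lhs => rw [← h2 u, ← nuca_smul k hp, h1]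
  intro g
  set ext : (N → A) → (G → A) := fun w h => if hh : g⁻¹ * h ∈ N then w ⟨g⁻¹ * h, hh⟩ else 0
    with hext
  have hextq : ∀ w, q g w = nuca N q (ext w) g := by
    intro w
    unfold nuca
    congr 1
    funext n
    have hmem : g⁻¹ * (g * (n : G)) ∈ N := by
      rw [inv_mul_cancel_left]; exact n.2
    simp only [hext, dif_pos hmem]
    congr 1
    exact (Subtype.ext (inv_mul_cancel_left g (n : G))).symm
  have hextadd : ∀ w1 w2, ext (w1 + w2) = ext w1 + ext w2 := by
    intro w1 w2
    funext h
    simp only [hext, Pi.add_apply]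
    split
    · rfl
    · rw [add_zero]
  have hextsmul : ∀ (r : k) (w : N → A), ext (r • w) = r • ext w := by
    intro r w
    funext h
    simp only [hext, Pi.smul_apply]
    split
    · rfl
    · rw [smul_zero]
  constructor
  · intro w1 w2
    rw [hextq, hextq w1, hextq w2, hextadd, hadd]
    rfl
  · intro r w
    rw [hextq, hextq w, hextsmul, hsmul]
    rfl

lemma transfer_inverses {M N : Set G} (hM : M.Finite) (hN : N.Finite)
    [Fintype M] [Fintype N] {p : G → (M → A) → A} {q : G → (N → A) → A}
    (hp : ∀ g, IsLinearMap k (p g)) (hq : ∀ g, IsLinearMap k (q g))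
    (h1 : ∀ x, nuca N q (nuca (M⁻¹) (starR k M p) x) = x)
    (h2 : ∀ x, nuca (M⁻¹) (starR k M p) (nuca N q x) = x) :
    (∀ x, nuca (N⁻¹) (starR k N q) (nuca M p x) = x) ∧
      (∀ x, nuca M p (nuca (N⁻¹) (starR k N q) x) = x) := by
  constructor
  · intro x
    refine cpair_eq_of_forall_right k fun y hy => ?_
    have hqy : FS (nuca N q y) := nuca_support k hN hq hy
    calc cpair k (nuca (N⁻¹) (starR k N q) (nuca M p x)) y
        = cpair k y (nuca (N⁻¹) (starR k N q) (nuca M p x)) := cpair_comm k _ _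
      _ = cpair k (nuca N q y) (nuca M p x) :=
          (adjoint k hN hq y (nuca M p x) (Or.inl hy)).symm
      _ = cpair k (nuca M p x) (nuca N q y) := cpair_comm k _ _
      _ = cpair k x (nuca (M⁻¹) (starR k M p) (nuca N q y)) :=
          adjoint k hM hp x (nuca N q y) (Or.inr hqy)
      _ = cpair k x y := by rw [h2]
  · intro x
    refine cpair_eq_of_forall_right k fun y hy => ?_
    have hPy : FS (nuca (M⁻¹) (starR k M p) y) :=
      nuca_support k hM.inv (starR_isLinear k M p) hy
    calc cpair k (nuca M p (nuca (N⁻¹) (starR k N q) x)) y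
        = cpair k (nuca (N⁻¹) (starR k N q) x) (nuca (M⁻¹) (starR k M p) y) :=
          adjoint k hM hp _ y (Or.inr hy)
      _ = cpair k (nuca (M⁻¹) (starR k M p) y) (nuca (N⁻¹) (starR k N q) x) := cpair_comm k _ _
      _ = cpair k (nuca N q (nuca (M⁻¹) (starR k M p) y)) x := by
          refine (adjoint k hN hq _ x (Or.inl hPy)).symm
      _ = cpair k y x := by rw [h1]
      _ = cpair k x y := cpair_comm k _ _

lemma stablyInvertible_star {M : Set G} (hM : M.Finite) [Fintype M]
    {s : G → (M → A) → A} (hs : ∀ g, IsLinearMap k (s g))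
    (h : StablyInvertible (M⁻¹) (starR k M s)) : StablyInvertible M s := by
  classical
  obtain ⟨N, hN, t, ht⟩ := h
  haveI : Fintype N := hN.fintype
  set tl : G → (N → A) → A := fun g => if IsLinearMap k (t g) then t g else 0 with htl
  refine ⟨N⁻¹, hN.inv, starR k N tl, ?_⟩
  intro p hp
  have hP := star_mem_orbitClosure k s hp
  obtain ⟨q, hq, hq1, hq2⟩ := ht _ hP
  have hplin : ∀ g, IsLinearMap k (p g) := closure_isLinear k hs hp
  have hPlin := starR_isLinear k M p
  have hqlin : ∀ g, IsLinearMap k (q g) := inverse_local_linear k hPlin hq1 hq2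
  have hqtl : q ∈ orbitClosure tl := by
    rw [mem_orbitClosure_iff] at hq ⊢
    intro W
    obtain ⟨g0, hg0⟩ := hq W
    refine ⟨g0, fun g hg => ?_⟩
    have hlin' : IsLinearMap k (t (g0⁻¹ * g)) := by
      rw [← hg0 g hg]; exact hqlin g
    simp only [htl, if_pos hlin']
    exact hg0 g hg
  obtain ⟨hi1, hi2⟩ := transfer_inverses k hM hN hplin hqlin hq1 hq2
  exact ⟨starR k N q, star_mem_orbitClosure k tl hqtl, hi1, hi2⟩

end Invertibility
/-- For a finitely generated group `G` and a finite vector space alphabet `A`,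
the stable surjunctivity conjecture holds for all linear NUCA `A^G → A^G` of
finite memory with uniformly bounded singularity if and only if so does the
stable dual-surjunctivity conjecture. -/
theorem stmt10 {k A : Type*} [Field k] [AddCommGroup A] [Module k A] [Finite A]
    {G : Type*} [Group G] (hfg : Group.FG G) :
    (∀ (M : Set G) (_ : M.Finite) (s : G → (M → A) → A),
        (∀ g, IsLinearMap k (s g)) → UBS s →
        (∀ p ∈ orbitClosure s, Function.Injective (nuca M p)) →
        StablyInvertible M s) ↔
      (∀ (M : Set G) (_ : M.Finite) (s : G → (M → A) → A),
        (∀ g, IsLinearMap k (s g)) → UBS s →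
        (∀ p ∈ orbitClosure s, PostSurj (nuca M p)) →
        StablyInvertible M s) := by
  constructor
  · intro H M hM s hslin hsUBS hPS
    haveI : Fintype M := hM.fintype
    refine stablyInvertible_star k hM hslin ?_
    refine H (M⁻¹) hM.inv (starR k M s) (starR_isLinear k M s) (UBS_star k hM hsUBS) ?_
    intro Q hQ
    obtain ⟨p, hpc, rfl⟩ := orbitClosure_star_surj k s hQ
    exact star_injective_of_postSurj k hM (closure_isLinear k hslin hpc) (hPS p hpc)
  · intro H M hM s hslin hsUBS hInj
    haveI : Fintype M := hM.fintype
    refine stablyInvertible_star k hM hslin ?_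
    refine H (M⁻¹) hM.inv (starR k M s) (starR_isLinear k M s) (UBS_star k hM hsUBS) ?_
    intro Q hQ
    obtain ⟨p, hpc, rfl⟩ := orbitClosure_star_surj k s hQ
    exact star_postSurj_of_injective k hM (closure_isLinear k hslin hpc) (hInj p hpc)
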